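/- Every countable dense-in-itself subset of ℝ can be partitioned into two disjoint dense-in-itself subsets that are each dense in the original set. -/

import Mathlib

open Set Filter

/-- An accumulation point has infinitely many points of `C` in every neighborhood. -/
lemma my_accPt_infinite {x : ℝ} {C : Set ℝ} (h : AccPt x (𝓟 C)) {U : Set ℝ}
    (hU : U ∈ nhds x) : (U ∩ C).Infinite := by
  intro hfin
  have hcl : IsClosed ((U ∩ C) \ {x}) := (hfin.diff (t := {x})).isClosed
  have hxmem : x ∈ ((U ∩ C) \ {x})ᶜ := by simp
  have hV : U \ ((U ∩ C) \ {x}) ∈ nhds x := by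
    rw [Set.diff_eq]
    exact Filter.inter_mem hU (hcl.isOpen_compl.mem_nhds hxmem)
  obtain ⟨y, ⟨hyV, hyC⟩, hyx⟩ := accPt_iff_nhds.mp h _ hV
  exact hyV.2 ⟨⟨hyV.1, hyC⟩, hyx⟩

lemma my_ratIoo_infinite {a b : ℝ} (h : a < b) :
    {q : ℚ | a < (q : ℝ) ∧ (q : ℝ) < b}.Infinite := by
  obtain ⟨p, hp1, hp2⟩ := exists_rat_btwn h
  obtain ⟨r, hr1, hr2⟩ := exists_rat_btwn hp2
  have hpr : p < r := by exact_mod_cast hr1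
  refine (Set.Ioo_infinite hpr).mono ?_
  rintro q ⟨h1, h2⟩
  exact ⟨lt_trans hp1 (by exact_mod_cast h1), lt_trans (by exact_mod_cast h2) hr2⟩

noncomputable def myE : ℕ → ℚ × ℚ := (Denumerable.eqv (ℚ × ℚ)).symm

noncomputable def myIv (n : ℕ) : Set ℝ := Set.Ioo ((myE n).1 : ℝ) ((myE n).2 : ℝ)

noncomputable def myPick1 {S : Set ℝ} (h : S.Infinite) : ℝ := h.nonempty.choose

lemma myPick1_mem {S : Set ℝ} (h : S.Infinite) : myPick1 h ∈ S := h.nonempty.choose_spec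

noncomputable def myPick2 {S : Set ℝ} (h : S.Infinite) : ℝ :=
  ((h.diff (Set.finite_singleton (myPick1 h))).nonempty).choose

lemma myPick2_spec {S : Set ℝ} (h : S.Infinite) :
    myPick2 h ∈ S ∧ myPick2 h ≠ myPick1 h := by
  have := ((h.diff (Set.finite_singleton (myPick1 h))).nonempty).choose_spec
  exact ⟨this.1, by simpa [myPick2] using this.2⟩

open scoped Classical in
noncomputable def myStep (X : Set ℝ) : ℕ → Set ℝ × Set ℝ
  | 0 => (∅, ∅)
  | n + 1 =>
    let AB := myStep X n
    if h : ((myIv n ∩ X) \ (AB.1 ∪ AB.2)).Infinite then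
      (insert (myPick1 h) AB.1, insert (myPick2 h) AB.2)
    else AB

lemma myStep_finite (X : Set ℝ) (n : ℕ) :
    (myStep X n).1.Finite ∧ (myStep X n).2.Finite := by
  induction n with
  | zero => simp [myStep]
  | succ n ih =>
    rw [myStep]
    split
    · exact ⟨ih.1.insert _, ih.2.insert _⟩
    · exact ih

lemma myStep_subX (X : Set ℝ) (n : ℕ) :
    (myStep X n).1 ⊆ X ∧ (myStep X n).2 ⊆ X := by
  induction n with
  | zero => simp [myStep]
  | succ n ih =>
    rw [myStep]
    split
    · rename_i h
      constructor
      · exact Set.insert_subset ((myPick1_mem h).1.2) ih.1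
      · exact Set.insert_subset ((myPick2_spec h).1.1.2) ih.2
    · exact ih

lemma myStep_mono_succ (X : Set ℝ) (n : ℕ) :
    (myStep X n).1 ⊆ (myStep X (n + 1)).1 ∧ (myStep X n).2 ⊆ (myStep X (n + 1)).2 := by
  rw [myStep]
  split
  · exact ⟨Set.subset_insert _ _, Set.subset_insert _ _⟩
  · exact ⟨le_refl _, le_refl _⟩

lemma myStep_mono (X : Set ℝ) {n m : ℕ} (h : n ≤ m) :
    (myStep X n).1 ⊆ (myStep X m).1 ∧ (myStep X n).2 ⊆ (myStep X m).2 := by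
  induction m with
  | zero => simp_all
  | succ m ih =>
    rcases Nat.lt_or_ge n (m + 1) with h' | h'
    · have := ih (Nat.lt_succ_iff.mp h')
      exact ⟨this.1.trans (myStep_mono_succ X m).1, this.2.trans (myStep_mono_succ X m).2⟩
    · have : n = m + 1 := le_antisymm h h'
      subst this; exact ⟨le_refl _, le_refl _⟩

lemma myStep_disj (X : Set ℝ) (n : ℕ) :
    ∀ x, x ∈ (myStep X n).1 → x ∉ (myStep X n).2 := by
  induction n with
  | zero => simp [myStep]
  | succ n ih =>
    rw [myStep]
    split
    · rename_i h
      intro x hx1 hx2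
      simp only [Set.mem_insert_iff] at hx1 hx2
      rcases hx1 with rfl | hx1 <;> rcases hx2 with h2 | h2
      · exact (myPick2_spec h).2 h2.symm
      · exact (myPick1_mem h).2 (Or.inr h2)
      · exact (myPick2_spec h).1.2 (Or.inl (h2 ▸ hx1))
      · exact ih x hx1 h2
    · exact ih

theorem stmt_16 (X : Set ℝ) (hX : X.Countable)
    (hni : ∀ x ∈ X, AccPt x (Filter.principal X)) :
    ∃ A B : Set ℝ, A ∪ B = X ∧ Disjoint A B ∧
      (∀ x ∈ A, AccPt x (Filter.principal A)) ∧
      (∀ x ∈ B, AccPt x (Filter.principal B)) ∧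
      X ⊆ closure A ∧ X ⊆ closure B := by
  classical
  set As : Set ℝ := ⋃ n, (myStep X n).1 with hAs
  set Bs : Set ℝ := ⋃ n, (myStep X n).2 with hBs
  have hBsX : Bs ⊆ X := Set.iUnion_subset fun n => (myStep_subX X n).2
  have hAsX : As ⊆ X := Set.iUnion_subset fun n => (myStep_subX X n).1
  have hABdisj : ∀ x, x ∈ As → x ∉ Bs := by
    intro x hx1 hx2
    obtain ⟨n, hn⟩ := Set.mem_iUnion.mp hx1
    obtain ⟨m, hm⟩ := Set.mem_iUnion.mp hx2
    exact myStep_disj X (max n m) x ((myStep_mono X (le_max_left n m)).1 hn)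
      ((myStep_mono X (le_max_right n m)).2 hm)
  -- the branch is taken at every good stage
  have branch : ∀ n, (myIv n ∩ X).Infinite →
      ((myIv n ∩ X) \ ((myStep X n).1 ∪ (myStep X n).2)).Infinite := by
    intro n hinf
    exact hinf.diff ((myStep_finite X n).1.union (myStep_finite X n).2)
  -- key: infinitely many stages fit in any neighborhood of any point of X
  have key : ∀ x ∈ X, ∀ U ∈ nhds x,
      {n : ℕ | x ∈ myIv n ∧ myIv n ⊆ U}.Infinite := by
    intro x hx U hU
    obtain ⟨ε, hε, hball⟩ := Metric.mem_nhds_iff.mp hU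
    obtain ⟨p, hp1, hp2⟩ := exists_rat_btwn (show x - ε < x by linarith)
    have hq : {q : ℚ | x < (q : ℝ) ∧ (q : ℝ) < x + ε}.Infinite :=
      my_ratIoo_infinite (by linarith)
    have : ((fun q => (Denumerable.eqv (ℚ × ℚ)) (p, q)) ''
        {q : ℚ | x < (q : ℝ) ∧ (q : ℝ) < x + ε}).Infinite :=
      hq.image (Set.injOn_of_injective (fun a b hab => by
        have := (Denumerable.eqv (ℚ × ℚ)).injective hab
        exact (Prod.mk.injEq _ _ _ _).mp this |>.2))
    refine this.mono ?_
    rintro n ⟨q, ⟨hq1, hq2⟩, rfl⟩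
    have hEn : myE ((Denumerable.eqv (ℚ × ℚ)) (p, q)) = (p, q) := by
      simp [myE]
    constructor
    · simp only [myIv, hEn, Set.mem_Ioo]
      exact ⟨hp2, hq1⟩
    · intro y hy
      simp only [myIv, hEn, Set.mem_Ioo] at hy
      apply hball
      rw [Metric.mem_ball, Real.dist_eq, abs_lt]
      constructor <;> nlinarith
  -- at each good stage, picks land in U
  have picks : ∀ x ∈ X, ∀ U ∈ nhds x, ∀ n ∈ {n : ℕ | x ∈ myIv n ∧ myIv n ⊆ U},
      ∃ a b : ℝ, a ∈ (myStep X (n+1)).1 ∧ b ∈ (myStep X (n+1)).2 ∧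
        a ∈ U ∧ b ∈ U ∧ a ∉ (myStep X n).1 ∪ (myStep X n).2 ∧
        b ∉ (myStep X n).1 ∪ (myStep X n).2 := by
    intro x hx U hU n hn
    have hinf : (myIv n ∩ X).Infinite :=
      my_accPt_infinite (hni x hx) (mem_nhds_iff.mpr ⟨myIv n, le_refl _, isOpen_Ioo, hn.1⟩)
    have hbr := branch n hinf
    refine ⟨myPick1 hbr, myPick2 hbr, ?_, ?_, hn.2 (myPick1_mem hbr).1.1,
      hn.2 (myPick2_spec hbr).1.1.1, (myPick1_mem hbr).2, (myPick2_spec hbr).1.2⟩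
    · simp only [myStep]
      rw [dif_pos hbr]
      exact Set.mem_insert _ _
    · simp only [myStep]
      rw [dif_pos hbr]
      exact Set.mem_insert _ _
  -- two distinct picks in U for both classes
  have twopicks : ∀ x ∈ X, ∀ U ∈ nhds x,
      (∃ a a' : ℝ, a ∈ As ∧ a' ∈ As ∧ a ∈ U ∧ a' ∈ U ∧ a ≠ a') ∧
      (∃ b b' : ℝ, b ∈ Bs ∧ b' ∈ Bs ∧ b ∈ U ∧ b' ∈ U ∧ b ≠ b') := by
    intro x hx U hU
    have hinf := key x hx U hU
    have aux : ∀ n m : ℕ, n < m → (x ∈ myIv n ∧ myIv n ⊆ U) → (x ∈ myIv m ∧ myIv m ⊆ U) →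
        (∃ a a' : ℝ, a ∈ As ∧ a' ∈ As ∧ a ∈ U ∧ a' ∈ U ∧ a ≠ a') ∧
        (∃ b b' : ℝ, b ∈ Bs ∧ b' ∈ Bs ∧ b ∈ U ∧ b' ∈ U ∧ b ≠ b') := by
      intro n m h hn hm
      obtain ⟨a, b, ha1, hb1, haU, hbU, _, _⟩ := picks x hx U hU n hn
      obtain ⟨a', b', ha1', hb1', haU', hbU', hfa', hfb'⟩ := picks x hx U hU m hm
      have hnm' : n + 1 ≤ m := h
      refine ⟨⟨a, a', Set.mem_iUnion.mpr ⟨n+1, ha1⟩, Set.mem_iUnion.mpr ⟨m+1, ha1'⟩,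
        haU, haU', ?_⟩, ⟨b, b', Set.mem_iUnion.mpr ⟨n+1, hb1⟩, Set.mem_iUnion.mpr ⟨m+1, hb1'⟩,
        hbU, hbU', ?_⟩⟩
      · rintro rfl
        exact hfa' (Or.inl ((myStep_mono X hnm').1 ha1))
      · rintro rfl
        exact hfb' (Or.inr ((myStep_mono X hnm').2 hb1))
    obtain ⟨n, hn⟩ := hinf.nonempty
    obtain ⟨m, hm, hmn'⟩ := (hinf.diff (Set.finite_singleton n)).nonempty
    have hmn : m ≠ n := by simpa using hmn'
    rcases Nat.lt_or_gt_of_ne hmn with h | h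
    · exact aux m n h hm hn
    · exact aux n m h hn hm
  have hAsA : As ⊆ X \ Bs := fun a ha => ⟨hAsX ha, hABdisj a ha⟩
  refine ⟨X \ Bs, Bs, Set.diff_union_of_subset hBsX, disjoint_sdiff_left, ?_, ?_, ?_, ?_⟩
  · intro x hx
    rw [accPt_iff_nhds]
    intro U hU
    obtain ⟨⟨a, a', ha, ha', haU, haU', hne⟩, _⟩ := twopicks x hx.1 U hU
    by_cases hax : a = x
    · exact ⟨a', ⟨haU', hAsA ha'⟩, fun h => hne (by rw [hax, h])⟩
    · exact ⟨a, ⟨haU, hAsA ha⟩, hax⟩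
  · intro x hx
    rw [accPt_iff_nhds]
    intro U hU
    obtain ⟨_, ⟨b, b', hb, hb', hbU, hbU', hne⟩⟩ := twopicks x (hBsX hx) U hU
    by_cases hbx : b = x
    · exact ⟨b', ⟨hbU', hb'⟩, fun h => hne (by rw [hbx, h])⟩
    · exact ⟨b, ⟨hbU, hb⟩, hbx⟩
  · intro x hx
    rw [mem_closure_iff_nhds]
    intro U hU
    obtain ⟨⟨a, _, ha, _, haU, _, _⟩, _⟩ := twopicks x hx U hU
    exact ⟨a, haU, hAsA ha⟩
  · intro x hx
    rw [mem_closure_iff_nhds]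
    intro U hU
    obtain ⟨_, ⟨b, _, hb, _, hbU, _, _⟩⟩ := twopicks x hx U hU
    exact ⟨b, hbU, hb⟩
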